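/- Fix p' ∈ ℝ₊₊^{2K}, and suppose w' ∈ ℝ₊₊^{2K} satisfies w' = λ'·f_{p'}(w') with λ' := 1/max{g₁(w'), g_{2,p'}(w')}, where g₁(w') = a < 1 and g_{2,p'}(w') = 1. Set p'' := a·p', and let w'' ∈ ℝ₊₊^{2K} be the unique vector satisfying w'' = λ''·f_{p''}(w'') with max{g₁(w''), g_{2,p''}(w'')} = 1 and λ'' := 1/max{g₁(f_{p''}(w'')), g_{2,p''}(f_{p''}(w''))}. Then λ'' > λ'. (This is the inductive step showing that iteratively scaling the power vector by the current load g₁ and recomputing the normalized fixed point produces a strictly increasing sequence of utilities until the full-load condition g₁(w) = 1 is reached.) -/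

import Mathlib

/-- Interference at link `l`: `I_l(p, w) = ((Ṽ · diag(p) · w)_l + σ²) / v_l`. -/
noncomputable def interf {K : ℕ} (V : Matrix (Fin (2 * K)) (Fin (2 * K)) ℝ)
    (v : Fin (2 * K) → ℝ) (σ2 : ℝ) (p w : Fin (2 * K) → ℝ) (l : Fin (2 * K)) : ℝ :=
  ((∑ j, V l j * (p j * w j)) + σ2) / v l

/-- `f_l(p, w) = d_l / (W₀ B log₂(1 + SINR_l(p, w)))` with `SINR_l = p_l / I_l(p, w)`. -/
noncomputable def rateF {K : ℕ} (V : Matrix (Fin (2 * K)) (Fin (2 * K)) ℝ)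
    (v : Fin (2 * K) → ℝ) (σ2 W0 B : ℝ) (d : Fin (2 * K) → ℝ)
    (p w : Fin (2 * K) → ℝ) (l : Fin (2 * K)) : ℝ :=
  d l / (W0 * B * Real.logb 2 (1 + p l / interf V v σ2 p w l))

/-- Load constraint `g₁(w) = ‖A w‖_∞`, where the 0/1 association matrix `A` with
exactly one 1 per column is encoded by the assignment map `asg` (link `l` is
associated to cell `asg l`). -/
noncomputable def gOne {K N : ℕ} (asg : Fin (2 * K) → Fin N) (w : Fin (2 * K) → ℝ) : ℝ :=
  ⨆ n : Fin N, ∑ l, if asg l = n then w l else 0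

/-- Power constraint `g₂(w, p) = W₀ · max_j (A^{ext} diag(w) p)_j / p^{max}_j`, with
the 0/1 matrix `A^{ext}` (one 1 per column) encoded by the assignment map `aext`. -/
noncomputable def gTwo {K N : ℕ} (aext : Fin (2 * K) → Fin (K + N))
    (pmax : Fin (K + N) → ℝ) (W0 : ℝ) (w p : Fin (2 * K) → ℝ) : ℝ :=
  W0 * ⨆ j : Fin (K + N), (∑ l, if aext l = j then w l * p l else 0) / pmax j


lemma interf_pos {K : ℕ} (V : Matrix (Fin (2 * K)) (Fin (2 * K)) ℝ) (hV : ∀ i j, 0 ≤ V i j)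
    (v : Fin (2 * K) → ℝ) (hv : ∀ i, 0 < v i) (σ2 : ℝ) (hσ2 : 0 < σ2)
    (p w : Fin (2 * K) → ℝ) (hp : ∀ i, 0 ≤ p i) (hw : ∀ i, 0 ≤ w i) (l : Fin (2 * K)) :
    0 < interf V v σ2 p w l := by
  unfold interf
  apply div_pos _ (hv l)
  have : (0:ℝ) ≤ ∑ j, V l j * (p j * w j) :=
    Finset.sum_nonneg fun j _ => mul_nonneg (hV l j) (mul_nonneg (hp j) (hw j))
  linarith

lemma rateF_pos {K : ℕ} (V : Matrix (Fin (2 * K)) (Fin (2 * K)) ℝ) (hV : ∀ i j, 0 ≤ V i j)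
    (v : Fin (2 * K) → ℝ) (hv : ∀ i, 0 < v i) (σ2 : ℝ) (hσ2 : 0 < σ2)
    (W0 B : ℝ) (hW0 : 0 < W0) (hB : 0 < B) (d : Fin (2 * K) → ℝ) (hd : ∀ i, 0 < d i)
    (p w : Fin (2 * K) → ℝ) (hp : ∀ i, 0 < p i) (hw : ∀ i, 0 ≤ w i) (l : Fin (2 * K)) :
    0 < rateF V v σ2 W0 B d p w l := by
  have hI := interf_pos V hV v hv σ2 hσ2 p w (fun i => (hp i).le) hw l
  have hs : 0 < p l / interf V v σ2 p w l := div_pos (hp l) hI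
  have hlog : 0 < Real.logb 2 (1 + p l / interf V v σ2 p w l) :=
    Real.logb_pos one_lt_two (by linarith)
  exact div_pos (hd l) (by positivity)

lemma rateF_mono {K : ℕ} (V : Matrix (Fin (2 * K)) (Fin (2 * K)) ℝ) (hV : ∀ i j, 0 ≤ V i j)
    (v : Fin (2 * K) → ℝ) (hv : ∀ i, 0 < v i) (σ2 : ℝ) (hσ2 : 0 < σ2)
    (W0 B : ℝ) (hW0 : 0 < W0) (hB : 0 < B) (d : Fin (2 * K) → ℝ) (hd : ∀ i, 0 < d i)
    (p w1 w2 : Fin (2 * K) → ℝ) (hp : ∀ i, 0 < p i) (hw1 : ∀ i, 0 ≤ w1 i)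
    (h12 : ∀ i, w1 i ≤ w2 i) (l : Fin (2 * K)) :
    rateF V v σ2 W0 B d p w1 l ≤ rateF V v σ2 W0 B d p w2 l := by
  have hw2 : ∀ i, 0 ≤ w2 i := fun i => (hw1 i).trans (h12 i)
  have hI1 := interf_pos V hV v hv σ2 hσ2 p w1 (fun i => (hp i).le) hw1 l
  have hI2 := interf_pos V hV v hv σ2 hσ2 p w2 (fun i => (hp i).le) hw2 l
  have hIle : interf V v σ2 p w1 l ≤ interf V v σ2 p w2 l := by
    unfold interf
    have hsum : ∑ j, V l j * (p j * w1 j) ≤ ∑ j, V l j * (p j * w2 j) :=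
      Finset.sum_le_sum fun j _ =>
        mul_le_mul_of_nonneg_left (mul_le_mul_of_nonneg_left (h12 j) (hp j).le) (hV l j)
    exact (div_le_div_iff_of_pos_right (hv l)).mpr (by linarith)
  have hsle : p l / interf V v σ2 p w2 l ≤ p l / interf V v σ2 p w1 l :=
    div_le_div_of_nonneg_left (hp l).le hI1 hIle
  have hs2 : 0 < p l / interf V v σ2 p w2 l := div_pos (hp l) hI2
  have hlog2 : 0 < Real.logb 2 (1 + p l / interf V v σ2 p w2 l) :=
    Real.logb_pos one_lt_two (by linarith)
  have hlogle : Real.logb 2 (1 + p l / interf V v σ2 p w2 l)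
      ≤ Real.logb 2 (1 + p l / interf V v σ2 p w1 l) := by
    exact Real.logb_le_logb_of_le one_lt_two (by linarith) (by linarith)
  unfold rateF
  exact div_le_div_of_nonneg_left (hd l).le (by positivity)
    (mul_le_mul_of_nonneg_left hlogle (by positivity))

lemma logb_scale {a s : ℝ} (ha : 0 < a) (ha1 : a < 1) (hs : 0 < s) :
    a * Real.logb 2 (1 + s) < Real.logb 2 (1 + a * s) := by
  have key : a * Real.log (1 + s) < Real.log (1 + a * s) := by
    have h := strictConcaveOn_log_Ioi.2 (x := 1 + s) (y := 1)
      (by simp [Set.mem_Ioi]; linarith) (by simp [Set.mem_Ioi]) (by intro h; nlinarith)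
      ha (by linarith : (0:ℝ) < 1 - a) (by ring)
    simp only [smul_eq_mul, Real.log_one, mul_zero, mul_one, add_zero] at h
    have he : a * (1 + s) + (1 - a) = 1 + a * s := by ring
    rw [he] at h
    linarith
  have h2 : (0:ℝ) < Real.log 2 := Real.log_pos one_lt_two
  unfold Real.logb
  rw [← mul_div_assoc]
  exact div_lt_div_of_pos_right key h2
lemma rateF_scale {K : ℕ} (V : Matrix (Fin (2 * K)) (Fin (2 * K)) ℝ) (hV : ∀ i j, 0 ≤ V i j)
    (v : Fin (2 * K) → ℝ) (hv : ∀ i, 0 < v i) (σ2 : ℝ) (hσ2 : 0 < σ2)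
    (W0 B : ℝ) (hW0 : 0 < W0) (hB : 0 < B) (d : Fin (2 * K) → ℝ) (hd : ∀ i, 0 < d i)
    (p w : Fin (2 * K) → ℝ) (hp : ∀ i, 0 < p i) (hw : ∀ i, 0 ≤ w i)
    (t : ℝ) (ht : 1 < t) (l : Fin (2 * K)) :
    rateF V v σ2 W0 B d p (t • w) l < t * rateF V v σ2 W0 B d p w l := by
  have ht0 : (0:ℝ) < t := by linarith
  have htw : ∀ i, 0 ≤ (t • w) i := fun i => by
    have : (t • w) i = t * w i := rfl
    rw [this]; exact mul_nonneg ht0.le (hw i)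
  have hI := interf_pos V hV v hv σ2 hσ2 p w (fun i => (hp i).le) hw l
  have hIt := interf_pos V hV v hv σ2 hσ2 p (t • w) (fun i => (hp i).le) htw l
  set s := p l / interf V v σ2 p w l with hs_def
  have hs : 0 < s := div_pos (hp l) hI
  have hIlt : interf V v σ2 p (t • w) l < t * interf V v σ2 p w l := by
    unfold interf
    have hsum : ∑ j, V l j * (p j * (t • w) j) = t * ∑ j, V l j * (p j * w j) := by
      rw [Finset.mul_sum]
      refine Finset.sum_congr rfl fun j _ => ?_
      have : (t • w) j = t * w j := rfl
      rw [this]; ring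
    have hS : (0:ℝ) ≤ ∑ j, V l j * (p j * w j) :=
      Finset.sum_nonneg fun j _ => mul_nonneg (hV l j) (mul_nonneg (hp j).le (hw j))
    rw [hsum, ← mul_div_assoc]
    apply div_lt_div_of_pos_right ?_ (hv l)
    nlinarith
  have hsinr_gt : s / t < p l / interf V v σ2 p (t • w) l := by
    have h1 : s / t = p l / (t * interf V v σ2 p w l) := by
      rw [hs_def, div_div, mul_comm]
    rw [h1]
    exact div_lt_div_of_pos_left (hp l) hIt hIlt
  have hlog1 : (1/t) * Real.logb 2 (1 + s) < Real.logb 2 (1 + s/t) := by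
    have h := logb_scale (a := 1/t) (s := s) (by positivity) (by rw [div_lt_one ht0]; exact ht) hs
    have he : 1 + 1/t * s = 1 + s/t := by ring
    rw [he] at h
    exact h
  have hst : 0 < s / t := by positivity
  have hlog2 : Real.logb 2 (1 + s/t) ≤ Real.logb 2 (1 + p l / interf V v σ2 p (t • w) l) :=
    Real.logb_le_logb_of_le one_lt_two (by linarith) (by linarith)
  have hlogs : 0 < Real.logb 2 (1 + s) := Real.logb_pos one_lt_two (by linarith)
  have key : d l / (W0 * B * Real.logb 2 (1 + p l / interf V v σ2 p (t • w) l))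
      < d l / (W0 * B * ((1/t) * Real.logb 2 (1 + s))) := by
    apply div_lt_div_of_pos_left (hd l) (by positivity)
    have h3 : (1/t) * Real.logb 2 (1 + s) < Real.logb 2 (1 + p l / interf V v σ2 p (t • w) l) :=
      lt_of_lt_of_le hlog1 hlog2
    exact mul_lt_mul_of_pos_left h3 (by positivity)
  have heq : d l / (W0 * B * ((1/t) * Real.logb 2 (1 + s)))
      = t * (d l / (W0 * B * Real.logb 2 (1 + s))) := by
    field_simp
  unfold rateF
  rw [← hs_def]
  calc d l / (W0 * B * Real.logb 2 (1 + p l / interf V v σ2 p (t • w) l))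
      < d l / (W0 * B * ((1/t) * Real.logb 2 (1 + s))) := key
    _ = t * (d l / (W0 * B * Real.logb 2 (1 + s))) := heq

/-- Proposition 2, inductive step: if the normalized fixed point `w'`
for power `p'` has load `g₁(w') = c < 1` and power usage `g_{2,p'}(w') = 1`, then the
normalized fixed point `w''` for the scaled power `p'' = c·p'` achieves a strictly
larger utility: `λ'' > λ'`. -/
theorem power_scaling_increases_utility (K N : ℕ) (hK : 1 ≤ K) (hN : 1 ≤ N)
    (V : Matrix (Fin (2 * K)) (Fin (2 * K)) ℝ) (hV : ∀ i j, 0 ≤ V i j)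
    (v : Fin (2 * K) → ℝ) (hv : ∀ i, 0 < v i)
    (σ2 : ℝ) (hσ2 : 0 < σ2) (W0 B : ℝ) (hW0 : 0 < W0) (hB : 0 < B)
    (d : Fin (2 * K) → ℝ) (hd : ∀ i, 0 < d i)
    (asg : Fin (2 * K) → Fin N) (aext : Fin (2 * K) → Fin (K + N))
    (pmax : Fin (K + N) → ℝ) (hpmax : ∀ j, 0 < pmax j)
    (p' : Fin (2 * K) → ℝ) (hp' : ∀ i, 0 < p' i)
    (w' : Fin (2 * K) → ℝ) (hw' : ∀ i, 0 < w' i) (lam' : ℝ)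
    (hlam' : lam' = 1 / max (gOne asg w') (gTwo aext pmax W0 w' p'))
    (hfix' : ∀ l, w' l = lam' * rateF V v σ2 W0 B d p' w' l)
    (c : ℝ) (hc : gOne asg w' = c) (hclt : c < 1)
    (hg2 : gTwo aext pmax W0 w' p' = 1)
    (w'' : Fin (2 * K) → ℝ) (hw'' : ∀ i, 0 < w'' i) (lam'' : ℝ)
    (hlam'' : lam'' = 1 / max
      (gOne asg (fun l => rateF V v σ2 W0 B d (c • p') w'' l))
      (gTwo aext pmax W0 (fun l => rateF V v σ2 W0 B d (c • p') w'' l) (c • p')))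
    (hfix'' : ∀ l, w'' l = lam'' * rateF V v σ2 W0 B d (c • p') w'' l)
    (hunit'' : max (gOne asg w'') (gTwo aext pmax W0 w'' (c • p')) = 1) :
    lam' < lam'' := by
  have h2K : 0 < 2 * K := by omega
  have hNe : Nonempty (Fin N) := ⟨⟨0, by omega⟩⟩
  have hNe2 : Nonempty (Fin (K + N)) := ⟨⟨0, by omega⟩⟩
  -- c is positive
  have hc0 : 0 < c := by
    set l0 : Fin (2 * K) := ⟨0, h2K⟩
    have h1 : w' l0 ≤ ∑ l, (if asg l = asg l0 then w' l else 0) := by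
      have h := Finset.single_le_sum (f := fun l => if asg l = asg l0 then w' l else 0)
        (fun i _ => by split <;> [exact (hw' i).le; exact le_rfl]) (Finset.mem_univ l0)
      simpa using h
    have h2 : (∑ l, if asg l = asg l0 then w' l else 0) ≤ gOne asg w' := by
      unfold gOne
      exact le_ciSup (f := fun n => ∑ l, if asg l = n then w' l else 0)
        (Finite.bddAbove_range _) (asg l0)
    rw [hc] at h2
    exact lt_of_lt_of_le (hw' l0) (h1.trans h2)
  have hcp : ∀ i, 0 < (c • p') i := fun i => by
    have h : (c • p') i = c * p' i := rfl
    rw [h]; exact mul_pos hc0 (hp' i)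
  have hlam'1 : lam' = 1 := by
    rw [hlam', hc, hg2, max_eq_right hclt.le]; norm_num
  have hfixw' : ∀ l, w' l = rateF V v σ2 W0 B d p' w' l := fun l => by
    rw [hfix' l, hlam'1, one_mul]
  set u : Fin (2 * K) → ℝ := fun l => w' l / c with hu_def
  have hu : ∀ l, 0 < u l := fun l => div_pos (hw' l) hc0
  have hIeq : ∀ l, interf V v σ2 (c • p') u l = interf V v σ2 p' w' l := by
    intro l
    unfold interf
    congr 2
    refine Finset.sum_congr rfl fun j _ => ?_
    have h1 : (c • p') j = c * p' j := rfl
    have h2 : u j = w' j / c := rfl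
    rw [h1, h2]
    field_simp
  have hA : ∀ l, rateF V v σ2 W0 B d (c • p') u l < u l := by
    intro l
    have hI := interf_pos V hV v hv σ2 hσ2 p' w' (fun i => (hp' i).le) (fun i => (hw' i).le) l
    set s := p' l / interf V v σ2 p' w' l with hs_def
    have hs : 0 < s := div_pos (hp' l) hI
    have hsinr : (c • p') l / interf V v σ2 (c • p') u l = c * s := by
      rw [show (c • p') l = c * p' l from rfl, hIeq l, mul_div_assoc, hs_def]
    have hlog := logb_scale hc0 hclt hs
    have hlogpos : 0 < Real.logb 2 (1 + s) := Real.logb_pos one_lt_two (by linarith)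
    have hfl : w' l = d l / (W0 * B * Real.logb 2 (1 + s)) := by
      rw [hfixw' l]; unfold rateF; rw [hs_def]
    have hgoal : rateF V v σ2 W0 B d (c • p') u l
        = d l / (W0 * B * Real.logb 2 (1 + c * s)) := by
      unfold rateF; rw [hsinr]
    have hfl2 : u l = d l / (W0 * B * Real.logb 2 (1 + s)) / c := by
      show w' l / c = _
      rw [hfl]
    rw [hgoal, hfl2, div_div]
    apply div_lt_div_of_pos_left (hd l)
      (mul_pos (mul_pos (mul_pos hW0 hB) hlogpos) hc0)
    nlinarith [mul_lt_mul_of_pos_left hlog (mul_pos hW0 hB)]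
  -- main contradiction argument
  rw [hlam'1]
  by_contra hcon
  push_neg at hcon
  have hrpos : ∀ l, 0 < rateF V v σ2 W0 B d (c • p') w'' l := fun l =>
    rateF_pos V hV v hv σ2 hσ2 W0 B hW0 hB d hd (c • p') w'' hcp (fun i => (hw'' i).le) l
  have hsub : ∀ l, w'' l ≤ rateF V v σ2 W0 B d (c • p') w'' l := fun l => by
    rw [hfix'' l]
    exact mul_le_of_le_one_left (hrpos l).le hcon
  obtain ⟨l0, -, hl0⟩ := Finset.exists_max_image Finset.univ (fun l => w'' l / u l)
    ⟨⟨0, h2K⟩, Finset.mem_univ _⟩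
  set t := w'' l0 / u l0 with ht_def
  have ht0 : 0 < t := div_pos (hw'' l0) (hu l0)
  have htle : ∀ l, w'' l ≤ t * u l := fun l =>
    (div_le_iff₀ (hu l)).mp (hl0 l (Finset.mem_univ l))
  have htl0 : w'' l0 = t * u l0 := by
    rw [ht_def, div_mul_cancel₀ _ (hu l0).ne']
  rcases le_or_gt t 1 with ht1 | ht1
  · -- case t ≤ 1 : w'' < u strictly, so both constraints are < 1, contradicting hunit''
    have hwu : ∀ l, w'' l ≤ u l := fun l =>
      (htle l).trans (mul_le_of_le_one_left (hu l).le ht1)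
    have hlt : ∀ l, w'' l < u l := fun l =>
      lt_of_le_of_lt ((hsub l).trans (rateF_mono V hV v hv σ2 hσ2 W0 B hW0 hB d hd
        (c • p') w'' u hcp (fun i => (hw'' i).le) hwu l)) (hA l)
    have hS : ∀ n, (∑ l, if asg l = n then w'' l else 0) < 1 := by
      intro n
      by_cases hex : ∃ l, asg l = n
      · obtain ⟨l1, hl1⟩ := hex
        have hlt1 : (∑ l, if asg l = n then w'' l else 0)
            < ∑ l, if asg l = n then u l else 0 := by
          apply Finset.sum_lt_sum
          · intro i _
            split
            · exact (hlt i).le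
            · exact le_rfl
          · exact ⟨l1, Finset.mem_univ _, by rw [if_pos hl1, if_pos hl1]; exact hlt l1⟩
        have h2 : (∑ l, if asg l = n then u l else 0) ≤ 1 := by
          have he : (∑ l, if asg l = n then u l else 0)
              = (∑ l, if asg l = n then w' l else 0) / c := by
            rw [Finset.sum_div]
            refine Finset.sum_congr rfl fun i _ => ?_
            split <;> simp [hu_def]
          rw [he, div_le_one hc0, ← hc]
          unfold gOne
          exact le_ciSup (f := fun n => ∑ l, if asg l = n then w' l else 0)
            (Finite.bddAbove_range _) n
        linarith
      · push_neg at hex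
        have h0 : (∑ l, if asg l = n then w'' l else 0) = 0 :=
          Finset.sum_eq_zero fun l _ => by simp [hex l]
        rw [h0]; norm_num
    obtain ⟨n0, hn0⟩ := Finite.exists_max (fun n => ∑ l, if asg l = n then w'' l else 0)
    have hg1lt : gOne asg w'' < 1 := lt_of_le_of_lt (ciSup_le hn0) (hS n0)
    have hT : ∀ j, W0 * ((∑ l, if aext l = j then w'' l * (c • p') l else 0) / pmax j) < 1 := by
      intro j
      by_cases hex : ∃ l, aext l = j
      · obtain ⟨l1, hl1⟩ := hex
        have hlt1 : (∑ l, if aext l = j then w'' l * (c • p') l else 0)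
            < ∑ l, if aext l = j then u l * (c • p') l else 0 := by
          apply Finset.sum_lt_sum
          · intro i _
            split
            · exact mul_le_mul_of_nonneg_right (hlt i).le (hcp i).le
            · exact le_rfl
          · exact ⟨l1, Finset.mem_univ _, by
              rw [if_pos hl1, if_pos hl1]
              exact mul_lt_mul_of_pos_right (hlt l1) (hcp l1)⟩
        have h2 : W0 * ((∑ l, if aext l = j then u l * (c • p') l else 0) / pmax j) ≤ 1 := by
          have he : (∑ l, if aext l = j then u l * (c • p') l else 0)
              = ∑ l, if aext l = j then w' l * p' l else 0 := by
            refine Finset.sum_congr rfl fun i _ => ?_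
            have h1 : (c • p') i = c * p' i := rfl
            have h2 : u i = w' i / c := rfl
            split
            · rw [h1, h2]; field_simp
            · rfl
          rw [he, ← hg2]
          unfold gTwo
          exact mul_le_mul_of_nonneg_left
            (le_ciSup (f := fun j => (∑ l, if aext l = j then w' l * p' l else 0) / pmax j)
              (Finite.bddAbove_range _) j) hW0.le
        have h3 : W0 * ((∑ l, if aext l = j then w'' l * (c • p') l else 0) / pmax j)
            < W0 * ((∑ l, if aext l = j then u l * (c • p') l else 0) / pmax j) :=
          mul_lt_mul_of_pos_left (div_lt_div_of_pos_right hlt1 (hpmax j)) hW0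
        linarith
      · push_neg at hex
        have h0 : (∑ l, if aext l = j then w'' l * (c • p') l else 0) = 0 :=
          Finset.sum_eq_zero fun l _ => by simp [hex l]
        rw [h0, zero_div, mul_zero]; norm_num
    obtain ⟨j0, hj0⟩ := Finite.exists_max
      (fun j => (∑ l, if aext l = j then w'' l * (c • p') l else 0) / pmax j)
    have hg2lt : gTwo aext pmax W0 w'' (c • p') < 1 := by
      unfold gTwo
      calc W0 * ⨆ j, (∑ l, if aext l = j then w'' l * (c • p') l else 0) / pmax j
          ≤ W0 * ((∑ l, if aext l = j0 then w'' l * (c • p') l else 0) / pmax j0) :=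
            mul_le_mul_of_nonneg_left (ciSup_le hj0) hW0.le
        _ < 1 := hT j0
    have hcontr := max_lt hg1lt hg2lt
    rw [hunit''] at hcontr
    exact lt_irrefl 1 hcontr
  · -- case t > 1 : scalability contradiction at l0
    have h1 := hsub l0
    have h2 : rateF V v σ2 W0 B d (c • p') w'' l0 ≤ rateF V v σ2 W0 B d (c • p') (t • u) l0 :=
      rateF_mono V hV v hv σ2 hσ2 W0 B hW0 hB d hd (c • p') w'' (t • u) hcp
        (fun i => (hw'' i).le)
        (fun i => by have h : (t • u) i = t * u i := rfl; rw [h]; exact htle i) l0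
    have h3 := rateF_scale V hV v hv σ2 hσ2 W0 B hW0 hB d hd (c • p') u hcp
      (fun i => (hu i).le) t ht1 l0
    have h4 : t * rateF V v σ2 W0 B d (c • p') u l0 < t * u l0 :=
      mul_lt_mul_of_pos_left (hA l0) ht0
    linarith [htl0]
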